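/- arXiv:1508.02559 — 3 statements merged into one kernel-verified Lean document; each statement's English description precedes it below -/
import Mathlib

section
/- Every cycle is nonrepetitively 5-choosable: for every n ≥ 3, the cycle graph C_n satisfies π_ℓ(C_n) ≤ 5. -/
open SimpleGraph
open scoped Fin.NatCast Fin.CommRing

/-- A vertex colouring `φ` of `G` is nonrepetitive if for no path of `G` the sequence of
colours along its vertices is a repetition, i.e. of the form `l ++ l` with `l` nonempty. -/
def Nonrepetitive {V β : Type*} (G : SimpleGraph V) (φ : V → β) : Prop :=
  ∀ ⦃u v : V⦄ (p : G.Walk u v), p.IsPath →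
    ∀ l : List β, l ≠ [] → p.support.map φ ≠ l ++ l

/-- The Thue chromatic number of `G`: the least number of colours in a nonrepetitive
vertex colouring of `G`. -/
noncomputable def thueNumber {V : Type*} (G : SimpleGraph V) : ℕ :=
  sInf {k | ∃ φ : V → Fin k, Nonrepetitive G φ}

/-- The Thue choice number of `G`: the least `k` such that from any assignment of lists of
size at least `k` to the vertices one can choose a nonrepetitive vertex colouring. -/
noncomputable def thueChoiceNumber {V : Type*} (G : SimpleGraph V) : ℕ :=
  sInf {k | ∀ L : V → Finset ℕ, (∀ v, k ≤ (L v).card) →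
    ∃ φ : V → ℕ, (∀ v, φ v ∈ L v) ∧ Nonrepetitive G φ}


namespace NR
open List Finset


def Sq (w : List ℕ) : Prop := ∃ l : List ℕ, l ≠ [] ∧ l ++ l <:+: w

theorem Sq.mono {v w : List ℕ} (h : v <:+: w) : Sq v → Sq w := by
  rintro ⟨l, hl, hinf⟩; exact ⟨l, hl, hinf.trans h⟩

theorem not_sq_nil : ¬ Sq [] := by
  rintro ⟨l, hl, hinf⟩
  rw [List.infix_nil] at hinf
  rcases List.append_eq_nil_iff.mp hinf with ⟨h, -⟩
  exact hl h

theorem getD_append_right {l m : List ℕ} (j d : ℕ) :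
    (l ++ m).getD (l.length + j) d = m.getD j d := by
  simp [List.getD, List.getElem?_append]

theorem sq_reverse {w : List ℕ} (h : Sq w) : Sq w.reverse := by
  obtain ⟨l, hl, hinf⟩ := h
  refine ⟨l.reverse, by simpa using hl, ?_⟩
  have : (l ++ l).reverse <:+: w.reverse := List.reverse_infix.mpr hinf
  simpa using this

theorem getD_take {l : List ℕ} {i t : ℕ} (h : i < t) (d : ℕ) :
    (l.take t).getD i d = l.getD i d := by
  simp [List.getD, List.getElem?_take, h]

theorem getD_append_left {l m : List ℕ} {i : ℕ} (h : i < l.length) (d : ℕ) :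
    (l ++ m).getD i d = l.getD i d := by
  simp [List.getD, List.getElem?_append, if_pos h]

section words
attribute [local instance] Classical.propDecidable

noncomputable def words (L : ℕ → Finset ℕ) (a : ℕ) : ℕ → Finset (List ℕ)
  | 0 => {[]}
  | k+1 => (words L a k).biUnion fun w =>
      ((L (a+k)).filter fun x => ¬ Sq (w ++ [x])).image fun x => w ++ [x]

theorem mem_words {L : ℕ → Finset ℕ} {a : ℕ} : ∀ {k : ℕ} {w : List ℕ},
    w ∈ words L a k ↔ (w.length = k ∧ ¬ Sq w ∧ ∀ i < k, w.getD i 0 ∈ L (a+i)) := by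
  intro k
  induction k with
  | zero =>
    intro w
    simp only [words, Finset.mem_singleton]
    constructor
    · rintro rfl; exact ⟨rfl, not_sq_nil, by omega⟩
    · rintro ⟨h, -, -⟩; exact List.eq_nil_of_length_eq_zero h
  | succ k ih =>
    intro w
    simp only [words, Finset.mem_biUnion, Finset.mem_image, Finset.mem_filter]
    constructor
    · rintro ⟨v, hv, x, ⟨hxL, hxs⟩, rfl⟩
      obtain ⟨hlen, hsq, hmem⟩ := ih.mp hv
      refine ⟨by simp [hlen], hxs, ?_⟩
      intro i hi
      rcases lt_or_eq_of_le (Nat.lt_succ_iff.mp hi) with hi' | rfl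
      · rw [getD_append_left (by omega)]; exact hmem i hi'
      · have : (v ++ [x]).getD i 0 = x := by
          have := getD_append_right (l := v) (m := [x]) 0 0
          simpa [hlen] using this
        rw [this]; exact hxL
    · rintro ⟨hlen, hsq, hmem⟩
      have hne : w ≠ [] := by intro h; rw [h] at hlen; simp at hlen
      refine ⟨w.dropLast, ?_, w.getLast hne, ⟨?_, ?_⟩, ?_⟩
      · refine ih.mpr ⟨by simp [hlen], ?_, ?_⟩
        · exact fun h => hsq (h.mono (List.dropLast_prefix w).isInfix)
        · intro i hi
          have h1 : w.dropLast.getD i 0 = w.getD i 0 := by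
            conv_rhs => rw [← List.dropLast_append_getLast hne]
            rw [getD_append_left (by simp [hlen]; omega)]
          rw [h1]; exact hmem i (by omega)
      · have h2 : w.getD k 0 = w.getLast hne := by
          rw [List.getD_eq_getElem _ 0 (by omega), List.getLast_eq_getElem]
          congr 1; omega
        rw [← h2]; exact hmem k (by omega)
      · rw [List.dropLast_append_getLast hne]; exact hsq
      · exact List.dropLast_append_getLast hne


theorem words_succ_count {L : ℕ → Finset ℕ} (hL : ∀ i, 5 ≤ (L i).card) (a k : ℕ) :
    5 * (words L a k).card ≤
      (words L a (k+1)).card + ∑ j ∈ Finset.range (k+1), (words L a j).card := by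
  classical
  set E : Finset (List ℕ) :=
    (words L a k).biUnion (fun w => (L (a+k)).image fun x => w ++ [x]) with hEdef
  -- every element of E has the shape w ++ [x]
  have hEmem : ∀ v ∈ E, ∃ w ∈ words L a k, ∃ x ∈ L (a+k), v = w ++ [x] := by
    intro v hv
    simp only [hEdef, Finset.mem_biUnion, Finset.mem_image] at hv
    obtain ⟨w, hw, x, hx, rfl⟩ := hv
    exact ⟨w, hw, x, hx, rfl⟩
  have hEcard : E.card = (words L a k).card * (L (a+k)).card := by
    rw [hEdef, Finset.card_biUnion]
    · refine Finset.sum_const_nat ?_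
      intro w hw
      exact Finset.card_image_of_injective _ (fun x y h => by simpa using h)
    · intro w hw w' hw' hne
      simp only [Finset.disjoint_left, Finset.mem_image]
      rintro v ⟨x, hx, rfl⟩ ⟨y, hy, he⟩
      have hlw : w.length = k := (mem_words.mp hw).1
      have hlw' : w'.length = k := (mem_words.mp hw').1
      exact hne (List.append_inj_left' he rfl).symm
  have hmemsucc : ∀ v, v ∈ words L a (k+1) ↔
      ∃ w ∈ words L a k, ∃ x, (x ∈ L (a+k) ∧ ¬ Sq (w ++ [x])) ∧ w ++ [x] = v := by
    intro v
    simp only [words, Finset.mem_biUnion, Finset.mem_image, Finset.mem_filter]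
  have hsplit : words L a (k+1) = E.filter (fun v => ¬ Sq v) := by
    ext v
    rw [hmemsucc, Finset.mem_filter]
    constructor
    · rintro ⟨w, hw, x, ⟨hx, hs⟩, rfl⟩
      refine ⟨?_, hs⟩
      rw [hEdef, Finset.mem_biUnion]
      exact ⟨w, hw, Finset.mem_image.mpr ⟨x, hx, rfl⟩⟩
    · rintro ⟨hvE, hs⟩
      obtain ⟨w, hw, x, hx, rfl⟩ := hEmem _ hvE
      exact ⟨w, hw, x, ⟨hx, hs⟩, rfl⟩
  have hcover : E.filter (fun v => Sq v) ⊆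
      (Finset.range (k+1)).biUnion
        (fun j => (words L a j).image (fun u => u ++ u.drop (2*j - (k+1)))) := by
    intro v hv
    rw [Finset.mem_filter] at hv
    obtain ⟨hvE, hvSq⟩ := hv
    obtain ⟨w, hw, x, hx, rfl⟩ := hEmem v hvE
    obtain ⟨hlw, hsqw, hmw⟩ := mem_words.mp hw
    have hvlen : (w ++ [x]).length = k + 1 := by simp [hlw]
    -- the square must be a suffix
    obtain ⟨l, hl, hinf⟩ := hvSq
    have hsuf : l ++ l <:+ w ++ [x] := by
      obtain ⟨s, r, hsr⟩ := hinf
      rcases eq_or_ne r [] with rfl | hrne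
      · rw [List.append_nil] at hsr
        exact ⟨s, hsr⟩
      · exfalso
        apply hsqw
        refine ⟨l, hl, s, r.dropLast, ?_⟩
        have h2 : (s ++ (l ++ l) ++ r.dropLast) ++ [r.getLast hrne] = w ++ [x] := by
          rw [← hsr]
          conv_rhs => rw [← List.dropLast_append_getLast hrne]
          simp
        exact (List.append_inj_left' h2 rfl)
    set t : ℕ := l.length with htdef
    have ht1 : 1 ≤ t := by
      rcases l with - | ⟨y, l'⟩
      · exact absurd rfl hl
      · simp [htdef]
    have ht2 : 2*t ≤ k+1 := by
      have := hsuf.length_le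
      simp [hvlen] at this
      omega
    -- the prefix p
    obtain ⟨p, hp⟩ := hsuf
    have hplen : p.length = k+1-2*t := by
      have := congrArg List.length hp
      simp [hlw] at this
      omega
    set j : ℕ := k+1-t with hjdef
    refine Finset.mem_biUnion.mpr ⟨j, Finset.mem_range.mpr (by omega), ?_⟩
    rw [Finset.mem_image]
    refine ⟨(w ++ [x]).take j, ?_, ?_⟩
    · -- v.take j ∈ words L a j
      refine mem_words.mpr ⟨by simp [hlw]; omega, ?_, ?_⟩
      · intro hsq
        apply hsqw
        have htake : (w ++ [x]).take j = w.take j := by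
          rw [List.take_append]
          have : j - w.length = 0 := by omega
          simp [this]
        rw [htake] at hsq
        exact hsq.mono (w.take_prefix j).isInfix
      · intro i hi
        rw [getD_take hi]
        rcases Nat.lt_or_ge i k with hik | hik
        · rw [getD_append_left (by omega)]
          exact hmw i hik
        · have hik' : i = k := by omega
          subst hik'
          have hgx : (w ++ [x]).getD i 0 = x := by
            rw [List.getD_eq_getElem _ 0 (by simp [hlw]), List.getElem_append]
            simp [hlw]
          rw [hgx]; exact hx
    · -- reconstruction
      have hpl : (w ++ [x]).take j = p ++ l := by
        have hv2 : w ++ [x] = (p ++ l) ++ l := by rw [← hp]; simp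
        rw [hv2, List.take_append]
        have h1 : (p ++ l).length = j := by simp [hplen]; omega
        have h2 : j - (p++l).length = 0 := by omega
        simp [h1, h2]
      rw [hpl]
      have hdrop : 2*j - (k+1) = p.length := by omega
      rw [hdrop, List.drop_left]
      rw [← hp]; simp
  -- counting
  have hbad : (E.filter (fun v => Sq v)).card ≤ ∑ j ∈ Finset.range (k+1), (words L a j).card := by
    refine le_trans (Finset.card_le_card hcover) ?_
    refine le_trans Finset.card_biUnion_le ?_
    exact Finset.sum_le_sum fun j _ => Finset.card_image_le
  have hEsplit : (E.filter (fun v => ¬ Sq v)).card + (E.filter (fun v => Sq v)).card = E.card := by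
    rw [Nat.add_comm]
    exact Finset.card_filter_add_card_filter_not _
  have h5 : 5 * (words L a k).card ≤ E.card := by
    rw [hEcard]
    calc 5 * (words L a k).card = (words L a k).card * 5 := by ring
    _ ≤ (words L a k).card * (L (a+k)).card := Nat.mul_le_mul_left _ (hL (a+k))
  rw [hsplit]
  omega

theorem words_zero_card (L : ℕ → Finset ℕ) (a : ℕ) : (words L a 0).card = 1 := rfl

theorem words_growth {L : ℕ → Finset ℕ} (hL : ∀ i, 5 ≤ (L i).card) (a : ℕ) : ∀ k : ℕ,
    3 * (words L a k).card ≤ (words L a (k+1)).card ∧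
    2 * ∑ j ∈ Finset.range (k+1), (words L a j).card ≤ 3 * (words L a k).card := by
  intro k
  induction k with
  | zero =>
    have h0 : (words L a 0).card = 1 := words_zero_card L a
    have h1 := words_succ_count hL a 0
    have hs : ∑ j ∈ Finset.range (0+1), (words L a j).card = 1 := by
      simp [h0]
    rw [hs] at h1
    rw [h0, hs]
    omega
  | succ k ih =>
    obtain ⟨hA, hB⟩ := ih
    have hB' : 2 * ∑ j ∈ Finset.range (k+1+1), (words L a j).card ≤ 3 * (words L a (k+1)).card := by
      rw [Finset.sum_range_succ]
      omega
    have h1 := words_succ_count hL a (k+1)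
    exact ⟨by omega, hB'⟩

theorem words_step {L : ℕ → Finset ℕ} (hL : ∀ i, 5 ≤ (L i).card) (a k : ℕ) :
    3 * (words L a k).card ≤ (words L a (k+1)).card := (words_growth hL a k).1

theorem words_pow_right {L : ℕ → Finset ℕ} (hL : ∀ i, 5 ≤ (L i).card) (a k : ℕ) : ∀ e : ℕ,
    3^e * (words L a k).card ≤ (words L a (k+e)).card := by
  intro e
  induction e with
  | zero => simp
  | succ e ih =>
    calc 3^(e+1) * (words L a k).card = 3 * (3^e * (words L a k).card) := by ring
    _ ≤ 3 * (words L a (k+e)).card := Nat.mul_le_mul_left _ ih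
    _ ≤ (words L a (k+e+1)).card := words_step hL a (k+e)

theorem words_pos {L : ℕ → Finset ℕ} (hL : ∀ i, 5 ≤ (L i).card) (a k : ℕ) :
    1 ≤ (words L a k).card := by
  have := words_pow_right hL a 0 k
  rw [words_zero_card] at this
  simp only [Nat.zero_add, Nat.mul_one] at this
  calc 1 ≤ 3^k := Nat.one_le_pow _ _ (by omega)
  _ ≤ _ := this

theorem words_congr {L₁ L₂ : ℕ → Finset ℕ} {a₁ a₂ : ℕ} (k : ℕ)
    (h : ∀ i < k, L₁ (a₁ + i) = L₂ (a₂ + i)) : words L₁ a₁ k = words L₂ a₂ k := by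
  ext w
  rw [mem_words, mem_words]
  constructor
  · rintro ⟨h1, h2, h3⟩
    exact ⟨h1, h2, fun i hi => by rw [← h i hi]; exact h3 i hi⟩
  · rintro ⟨h1, h2, h3⟩
    exact ⟨h1, h2, fun i hi => by rw [h i hi]; exact h3 i hi⟩

theorem getD_reverse {l : List ℕ} {i : ℕ} (h : i < l.length) (d : ℕ) :
    l.reverse.getD i d = l.getD (l.length - 1 - i) d := by
  rw [List.getD_eq_getElem _ d (by simpa using h), List.getD_eq_getElem _ d (by omega)]
  exact List.getElem_reverse ..

theorem card_words_rev (L : ℕ → Finset ℕ) (a k : ℕ) :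
    (words L a k).card = (words (fun j => L (a + (k - 1 - j))) 0 k).card := by
  refine Finset.card_bij (fun w _ => w.reverse) ?_ ?_ ?_
  · intro w hw
    obtain ⟨h1, h2, h3⟩ := mem_words.mp hw
    refine mem_words.mpr ⟨by simpa using h1, ?_, ?_⟩
    · intro hs
      exact h2 (by simpa using sq_reverse hs)
    · intro i hi
      rw [getD_reverse (by omega), h1]
      have := h3 (k - 1 - i) (by omega)
      simpa using this
  · intro w₁ h₁ w₂ h₂ he
    simpa using congrArg List.reverse he
  · intro v hv
    obtain ⟨h1, h2, h3⟩ := mem_words.mp hv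
    refine ⟨v.reverse, mem_words.mpr ⟨by simpa using h1, ?_, ?_⟩, by simp⟩
    · intro hs
      exact h2 (by simpa using sq_reverse hs)
    · intro i hi
      rw [getD_reverse (by omega), h1]
      have := h3 (k - 1 - i) (by omega)
      have harg : k - 1 - (0 + (k - 1 - i)) = i := by omega
      rwa [harg] at this

theorem words_step_left {L : ℕ → Finset ℕ} (hL : ∀ i, 5 ≤ (L i).card) (a k : ℕ) (ha : 1 ≤ a) :
    3 * (words L a k).card ≤ (words L (a-1) (k+1)).card := by
  have h1 : (words L (a-1) (k+1)).card
      = (words (fun j => L ((a-1) + (k + 1 - 1 - j))) 0 (k+1)).card := card_words_rev L (a-1) (k+1)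
  have h2 : 3 * (words (fun j => L ((a-1) + (k + 1 - 1 - j))) 0 k).card
      ≤ (words (fun j => L ((a-1) + (k + 1 - 1 - j))) 0 (k+1)).card :=
    words_step (fun i => hL _) 0 k
  have h3 : (words (fun j => L ((a-1) + (k + 1 - 1 - j))) 0 k).card = (words L a k).card := by
    rw [card_words_rev (fun j => L ((a-1) + (k + 1 - 1 - j))) 0 k]
    have := words_congr (L₁ := fun j => (fun j' => L ((a-1) + (k + 1 - 1 - j'))) (0 + (k - 1 - j)))
      (L₂ := L) (a₁ := 0) (a₂ := a) k ?_
    · rw [this]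
    · intro i hi
      simp only []
      congr 1
      omega
  omega

theorem words_pow_left {L : ℕ → Finset ℕ} (hL : ∀ i, 5 ≤ (L i).card) (a k : ℕ) : ∀ d : ℕ, d ≤ a →
    3^d * (words L a k).card ≤ (words L (a-d) (k+d)).card := by
  intro d
  induction d with
  | zero => simp
  | succ d ih =>
    intro hd
    have h1 : 1 ≤ a - d := by omega
    calc 3^(d+1) * (words L a k).card = 3 * (3^d * (words L a k).card) := by ring
    _ ≤ 3 * (words L (a-d) (k+d)).card := Nat.mul_le_mul_left _ (ih (by omega))
    _ ≤ (words L (a-d-1) (k+d+1)).card := words_step_left hL (a-d) (k+d) h1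
    _ = (words L (a-(d+1)) (k+(d+1))).card := by congr 1 <;> omega


/-! ### Wrap-around squares on a cycle of length `n` -/

/-- `w` (a word of length `n`) has a cyclic square wrapping around position `n-1`/`0`. -/
def WSq (n : ℕ) (w : List ℕ) : Prop :=
  ∃ t s, 1 ≤ t ∧ 2*t ≤ n ∧ s < n ∧ n < s + 2*t ∧
    ∀ i < t, w.getD ((s+i) % n) 0 = w.getD ((s+t+i) % n) 0

/-- left endpoint of the erased half of a wrap square -/
def alf (n t s : ℕ) : ℕ := if s + 2*t - n ≤ t then s + 2*t - n else s + 2*t - n - t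

/-- where cyclic position `j` sits inside the complement interval -/
def rho (n t s j : ℕ) : ℕ :=
  if s + 2*t - n ≤ t then
    (if j < s + 2*t - n then j + n - t - (s + 2*t - n)
     else if j < s + t then j - (s + 2*t - n)
     else j - t - (s + 2*t - n))
  else
    (if j < s + 2*t - n - t then j + 2*t - (s + 2*t - n)
     else if j < s then j - (s + 2*t - n - t)
     else j - s)

/-- reconstruct the word on the whole cycle from its restriction to the complement interval -/
def recon (n t s : ℕ) (u : List ℕ) : List ℕ := (List.range n).map fun j => u.getD (rho n t s j) 0

theorem alf_le {n t s : ℕ} (ht1 : 1 ≤ t) (ht2 : 2*t ≤ n) (hs : s < n) (hw2 : n < s + 2*t) :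
    alf n t s ≤ t := by
  unfold alf; split_ifs <;> omega

theorem mod_self_lt {n x : ℕ} (h : x < n) : x % n = x := Nat.mod_eq_of_lt h

theorem mod_sub {n x : ℕ} (h1 : n ≤ x) (h2 : x < 2*n) : x % n = x - n := by
  have hn : 0 < n := by omega
  rw [Nat.mod_eq_sub_mod h1, Nat.mod_eq_of_lt (by omega)]

theorem getD_drop' {l : List ℕ} (s i d : ℕ) : (l.drop s).getD i d = l.getD (s + i) d := by
  simp [List.getD, List.getElem?_drop]

theorem mem_badC {L : ℕ → Finset ℕ} {n t s : ℕ} (ht1 : 1 ≤ t) (ht2 : 2*t ≤ n) (hs : s < n)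
    (hw2 : n < s + 2*t) {w : List ℕ} (hw : w ∈ words L 0 n)
    (hrel : ∀ i < t, w.getD ((s+i) % n) 0 = w.getD ((s+t+i) % n) 0) :
    w ∈ (words L (alf n t s) (n - t)).image (recon n t s) := by
  obtain ⟨hlen, hsq, hmem⟩ := mem_words.mp hw
  have hα : alf n t s ≤ t := alf_le ht1 ht2 hs hw2
  set α := alf n t s with hαdef
  set u : List ℕ := (w.drop α).take (n - t) with hudef
  have hulen : u.length = n - t := by
    simp [hudef, hlen]
    omega
  have hugetD : ∀ i < n - t, u.getD i 0 = w.getD (α + i) 0 := by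
    intro i hi
    rw [hudef, getD_take hi, getD_drop']
  refine Finset.mem_image.mpr ⟨u, ?_, ?_⟩
  · refine mem_words.mpr ⟨hulen, ?_, ?_⟩
    · intro hsqu
      exact hsq (hsqu.mono (((w.drop α).take_prefix (n-t)).isInfix.trans (w.drop_suffix α).isInfix))
    · intro i hi
      rw [hugetD i hi]
      have := hmem (α + i) (by omega)
      simpa using this
  · -- recon n t s u = w
    refine List.ext_getElem (by simp [recon, hlen]) ?_
    intro j hj hj'
    have hjn : j < n := by simpa [recon] using hj
    have hrec : (recon n t s u)[j] = u.getD (rho n t s j) 0 := by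
      simp [recon]
    rw [hrec]
    have hwj : w[j]'hj' = w.getD j 0 := (List.getD_eq_getElem _ 0 hj').symm
    rw [hwj]
    -- main case analysis
    have key : rho n t s j < n - t ∧ α + rho n t s j = j ∨
        (∃ i < t, rho n t s j < n - t ∧
          ((α + rho n t s j = (s+i) % n ∧ j = (s+t+i) % n) ∨
           (α + rho n t s j = (s+t+i) % n ∧ j = (s+i) % n))) := by
      rw [hαdef]
      unfold rho alf
      split_ifs with hc h1 h2 h3 h4
      · -- m ≤ t, j < m
        refine Or.inr ⟨j + n - s - t, by omega, by omega, Or.inl ⟨?_, ?_⟩⟩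
        · rw [mod_self_lt (by omega)]; omega
        · have : s + t + (j + n - s - t) = j + n := by omega
          rw [this, mod_sub (by omega) (by omega)]; omega
      · -- m ≤ t, m ≤ j < s + t
        exact Or.inl ⟨by omega, by omega⟩
      · -- m ≤ t, s + t ≤ j
        refine Or.inr ⟨j - s - t, by omega, by omega, Or.inl ⟨?_, ?_⟩⟩
        · rw [mod_self_lt (by omega)]; omega
        · rw [mod_self_lt (by omega)]; omega
      · -- m > t, j < m - t
        refine Or.inr ⟨j + 2*t - (s + 2*t - n), by omega, by omega, Or.inr ⟨?_, ?_⟩⟩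
        · have : s + t + (j + 2*t - (s + 2*t - n)) = j + t + n := by omega
          rw [this, mod_sub (by omega) (by omega)]; omega
        · have : s + (j + 2*t - (s + 2*t - n)) = j + n := by omega
          rw [this, mod_sub (by omega) (by omega)]; omega
      · -- m > t, m - t ≤ j < s
        exact Or.inl ⟨by omega, by omega⟩
      · -- m > t, s ≤ j
        refine Or.inr ⟨j - s, by omega, by omega, Or.inr ⟨?_, ?_⟩⟩
        · have : s + t + (j - s) = j + t := by omega
          rw [this, mod_sub (by omega) (by omega)]; omega
        · rw [mod_self_lt (by omega)]; omega
    rcases key with ⟨hlt, heq⟩ | ⟨i, hi, hlt, hcase⟩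
    · rw [hugetD _ hlt, heq]
    · rcases hcase with ⟨h1, h2⟩ | ⟨h1, h2⟩
      · rw [hugetD _ hlt, h1, h2]
        exact hrel i hi
      · rw [hugetD _ hlt, h1, h2]
        exact (hrel i hi).symm

theorem pow_badC_le {L : ℕ → Finset ℕ} (hL : ∀ i, 5 ≤ (L i).card) {n t s : ℕ}
    (ht1 : 1 ≤ t) (ht2 : 2*t ≤ n) (hs : s < n) (hw2 : n < s + 2*t) :
    3^t * (words L (alf n t s) (n - t)).card ≤ (words L 0 n).card := by
  have hα : alf n t s ≤ t := alf_le ht1 ht2 hs hw2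
  set α := alf n t s with hαdef
  have h1 : 3^(t-α) * (words L α (n-t)).card ≤ (words L α (n-t+(t-α))).card :=
    words_pow_right hL α (n-t) (t-α)
  have e1 : n - t + (t - α) = n - α := by omega
  rw [e1] at h1
  have h2 : 3^α * (words L α (n-α)).card ≤ (words L (α-α) (n-α+α)).card :=
    words_pow_left hL α (n-α) α le_rfl
  have e2 : α - α = 0 := by omega
  have e3 : n - α + α = n := by omega
  rw [e2, e3] at h2
  calc 3^t * (words L α (n-t)).card = 3^α * (3^(t-α) * (words L α (n-t)).card) := by
        rw [← Nat.mul_assoc, ← Nat.pow_add]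
        congr 2
        omega
  _ ≤ 3^α * (words L α (n-α)).card := Nat.mul_le_mul_left _ h1
  _ ≤ _ := h2

theorem geom_sum_id (T : ℕ) :
    (∑ t ∈ Finset.Icc 1 T, (2*t-1) * 3^(T-t)) + (T+1) = 3^T := by
  induction T with
  | zero => simp
  | succ T ih =>
    rw [Finset.sum_Icc_succ_top (by omega)]
    have hstep : ∑ t ∈ Finset.Icc 1 T, (2*t-1) * 3^(T+1-t)
        = 3 * ∑ t ∈ Finset.Icc 1 T, (2*t-1) * 3^(T-t) := by
      rw [Finset.mul_sum]
      refine Finset.sum_congr rfl ?_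
      intro t ht
      rw [Finset.mem_Icc] at ht
      have : T + 1 - t = (T - t) + 1 := by omega
      rw [this, pow_succ]
      ring
    rw [hstep]
    have h3 : 3^(T+1) = 3 * 3^T := by rw [pow_succ]; ring
    have h4 : (2*(T+1)-1) * 3^(T+1-(T+1)) = 2*T+1 := by
      rw [show T+1-(T+1) = 0 from by omega, pow_zero, mul_one]
      omega
    omega

theorem wrap_count {L : ℕ → Finset ℕ} (hL : ∀ i, 5 ≤ (L i).card) {n : ℕ} (hn : 3 ≤ n) :
    ∃ w, w ∈ words L 0 n ∧ ¬ WSq n w := by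
  classical
  set T := n / 2 with hT
  set N := (words L 0 n).card with hN
  have hsub : (words L 0 n).filter (WSq n) ⊆
      (Finset.Icc 1 T).biUnion fun t => (Finset.Ioo (n - 2*t) n).biUnion fun s =>
        (words L (alf n t s) (n - t)).image (recon n t s) := by
    intro w hw
    rw [Finset.mem_filter] at hw
    obtain ⟨hwmem, t, s, ht1, ht2, hs, hw2, hrel⟩ := hw
    refine Finset.mem_biUnion.mpr ⟨t, Finset.mem_Icc.mpr ⟨ht1, by omega⟩, ?_⟩
    refine Finset.mem_biUnion.mpr ⟨s, Finset.mem_Ioo.mpr ⟨by omega, hs⟩, ?_⟩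
    exact mem_badC ht1 ht2 hs hw2 hwmem hrel
  have hcard : ((words L 0 n).filter (WSq n)).card ≤
      ∑ t ∈ Finset.Icc 1 T, ∑ s ∈ Finset.Ioo (n - 2*t) n,
        (words L (alf n t s) (n - t)).card := by
    refine le_trans (Finset.card_le_card hsub) ?_
    refine le_trans Finset.card_biUnion_le ?_
    refine Finset.sum_le_sum fun t _ => ?_
    refine le_trans Finset.card_biUnion_le ?_
    exact Finset.sum_le_sum fun s _ => Finset.card_image_le
  have hmul : 3^T * ((words L 0 n).filter (WSq n)).card ≤ (3^T - (T+1)) * N := by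
    calc 3^T * ((words L 0 n).filter (WSq n)).card
        ≤ 3^T * ∑ t ∈ Finset.Icc 1 T, ∑ s ∈ Finset.Ioo (n - 2*t) n,
            (words L (alf n t s) (n - t)).card := Nat.mul_le_mul_left _ hcard
    _ = ∑ t ∈ Finset.Icc 1 T, ∑ s ∈ Finset.Ioo (n - 2*t) n,
            3^T * (words L (alf n t s) (n - t)).card := by
          rw [Finset.mul_sum]
          exact Finset.sum_congr rfl fun t _ => Finset.mul_sum _ _ _
    _ ≤ ∑ t ∈ Finset.Icc 1 T, ∑ s ∈ Finset.Ioo (n - 2*t) n, 3^(T-t) * N := by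
          refine Finset.sum_le_sum fun t ht => Finset.sum_le_sum fun s hs => ?_
          rw [Finset.mem_Icc] at ht
          rw [Finset.mem_Ioo] at hs
          have ht2 : 2*t ≤ n := by omega
          have hw2 : n < s + 2*t := by omega
          have e : 3^T = 3^(T-t) * 3^t := by
            rw [← Nat.pow_add]
            congr 1
            omega
          rw [e, Nat.mul_assoc]
          exact Nat.mul_le_mul_left _ (pow_badC_le hL ht.1 ht2 hs.2 hw2)
    _ = ∑ t ∈ Finset.Icc 1 T, (2*t-1) * (3^(T-t) * N) := by
          refine Finset.sum_congr rfl fun t ht => ?_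
          rw [Finset.mem_Icc] at ht
          rw [Finset.sum_const, Nat.card_Ioo, smul_eq_mul]
          congr 1
          omega
    _ = (∑ t ∈ Finset.Icc 1 T, (2*t-1) * 3^(T-t)) * N := by
          rw [Finset.sum_mul]
          exact Finset.sum_congr rfl fun t _ => by ring
    _ = (3^T - (T+1)) * N := by
          have := geom_sum_id T
          congr 1
          omega
  have hNpos : 1 ≤ N := words_pos hL 0 n
  have hTpow : T + 1 ≤ 3^T := by
    have h1 := Nat.lt_two_pow_self (n := T)
    have h2 := Nat.pow_le_pow_left (by omega : 2 ≤ 3) T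
    omega
  have hlt : ((words L 0 n).filter (WSq n)).card < N := by
    by_contra hge
    push_neg at hge
    have h1 : 3^T * N ≤ 3^T * ((words L 0 n).filter (WSq n)).card :=
      Nat.mul_le_mul_left _ hge
    have h2 : (3^T - (T+1)) * N < 3^T * N := by
      have hpos : 0 < 3^T := Nat.pow_pos (by omega)
      refine Nat.mul_lt_mul_of_lt_of_le ?_ le_rfl (by omega)
      omega
    omega
  have := Finset.card_filter_add_card_filter_not (s := words L 0 n) (WSq n)
  have hne : ((words L 0 n).filter (fun w => ¬ WSq n w)).Nonempty := by
    rw [← Finset.card_pos]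
    omega
  obtain ⟨w, hw⟩ := hne
  rw [Finset.mem_filter] at hw
  exact ⟨w, hw.1, hw.2⟩

end words


theorem getD_default_irrel {α : Type*} (l : List α) (i : ℕ) (h : i < l.length) (d d' : α) :
    l.getD i d = l.getD i d' := by
  rw [List.getD_eq_getElem _ d h, List.getD_eq_getElem _ d' h]


theorem arc_of_path {m : ℕ} : ∀ {u v : Fin (m+3)} (p : (cycleGraph (m+3)).Walk u v),
    p.IsPath → ∃ δ : Fin (m+3), (δ = 1 ∨ δ = -1) ∧
      ∀ i < p.support.length, p.support.getD i u = u + (i : Fin (m+3)) * δ := by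
  intro u v p
  induction p with
  | nil =>
    intro _
    refine ⟨1, Or.inl rfl, ?_⟩
    intro i hi
    simp only [Walk.support_nil, List.length_singleton] at hi
    have hi0 : i = 0 := by omega
    subst hi0
    simp
  | @cons u b v h q ih =>
    intro hp
    have hq : q.IsPath := hp.of_cons
    have hu : u ∉ q.support := (Walk.cons_isPath_iff h q).mp hp |>.2
    obtain ⟨δ, hδ, harc⟩ := ih hq
    have hε : b - u = 1 ∨ b - u = -1 := by
      rcases cycleGraph_adj.mp h with h1 | h1
      · right
        rw [← h1]
        ring
      · left
        exact h1
    have hb : b = u + (b - u) := by ring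
    cases q with
    | nil =>
      refine ⟨b - u, hε, ?_⟩
      intro i hi
      simp [Walk.support_cons, Walk.support_nil] at hi
      have : i = 0 ∨ i = 1 := by omega
      rcases this with rfl | rfl
      · simp
      · simp only [Walk.support_cons, Walk.support_nil]
        have hg : [u, b].getD 1 u = b := rfl
        rw [hg, Nat.cast_one, one_mul]
        exact hb
    | @cons b c v h2 q2 =>
      set q : (cycleGraph (m+3)).Walk b v := Walk.cons h2 q2 with hqdef
      by_cases hεδ : b - u = δ
      · refine ⟨δ, hδ, ?_⟩
        intro i hi
        match i with
        | 0 => simp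
        | (i+1) =>
          have hi' : i < q.support.length := by
            simpa [Walk.support_cons] using hi
          have h1 : (Walk.cons h q).support.getD (i+1) u = q.support.getD i u := by
            simp [Walk.support_cons]
          rw [h1, getD_default_irrel _ _ hi' u b, harc i hi']
          rw [hb, hεδ]
          push_cast
          ring
      · exfalso
        have hεδ' : b - u = -δ := by
          rcases hε with h1 | h1 <;> rcases hδ with h2 | h2
          · exact absurd (h1.trans h2.symm) hεδ
          · rw [h1, h2, neg_neg]
          · rw [h1, h2]
          · exact absurd (h1.trans h2.symm) hεδ
        have hlen : 1 < q.support.length := by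
          simp [hqdef, Walk.support_cons]
        have h1 : q.support.getD 1 b = b + 1 * δ := by
          have := harc 1 hlen
          simpa using this
        have hub : u = q.support.getD 1 b := by
          rw [h1, one_mul]
          rw [hb, hεδ']
          ring
        apply hu
        rw [hub, List.getD_eq_getElem _ b hlen]
        exact List.getElem_mem _

theorem val_add_natCast {m : ℕ} (c : Fin (m+3)) (i : ℕ) :
    (c + (i : Fin (m+3))).val = (c.val + i) % (m+3) := by
  rw [Fin.add_def, Fin.val_natCast]
  conv_rhs => rw [Nat.add_mod]
  rw [Nat.mod_eq_of_lt c.isLt]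

theorem sq_of_linear {w : List ℕ} {s t : ℕ} (ht1 : 1 ≤ t) (hst : s + 2*t ≤ w.length)
    (hrel : ∀ i < t, w.getD (s+i) 0 = w.getD (s+t+i) 0) : Sq w := by
  have hlen : ((w.drop s).take t).length = t := by
    simp [List.length_take, List.length_drop]
    omega
  refine ⟨(w.drop s).take t, ?_, ?_⟩
  · intro h
    rw [h] at hlen
    simp at hlen
    omega
  · have hinf : (w.drop s).take (2*t) <:+: w :=
      ((w.drop s).take_prefix (2*t)).isInfix.trans (w.drop_suffix s).isInfix
    have heq : (w.drop s).take (2*t) = (w.drop s).take t ++ (w.drop s).take t := by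
      refine List.ext_getElem ?_ ?_
      · simp [List.length_take, List.length_drop, hlen]
        omega
      · intro i h1 h2
        have hi2t : i < 2*t := by
          simp [List.length_take, List.length_drop] at h1
          omega
        rw [← List.getD_eq_getElem _ 0 h1, ← List.getD_eq_getElem _ 0 h2]
        rw [getD_take hi2t, getD_drop']
        rcases Nat.lt_or_ge i t with hit | hit
        · rw [getD_append_left (by omega), getD_take hit, getD_drop']
        · have e : i = ((w.drop s).take t).length + (i - t) := by rw [hlen]; omega
          conv_rhs => rw [e]
          rw [getD_append_right, getD_take (by omega), getD_drop']
          have hthis := hrel (i - t) (by omega)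
          have e2 : s + t + (i - t) = s + i := by omega
          rw [e2] at hthis
          exact hthis.symm
    rw [← heq]
    exact hinf

theorem no_cyc {m : ℕ} {w : List ℕ} (hwlen : w.length = m+3) (hsq : ¬ Sq w)
    (hwsq : ¬ WSq (m+3) w) (c : Fin (m+3)) (t : ℕ) (ht1 : 1 ≤ t) (ht2 : 2*t ≤ m+3)
    (hrel : ∀ i < t, w.getD ((c.val + i) % (m+3)) 0 = w.getD ((c.val + t + i) % (m+3)) 0) :
    False := by
  have hs : c.val < m+3 := c.isLt
  by_cases hcase : c.val + 2*t ≤ m+3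
  · apply hsq
    refine sq_of_linear (s := c.val) (t := t) ht1 (by omega) ?_
    intro i hi
    have := hrel i hi
    rwa [mod_self_lt (by omega), mod_self_lt (by omega)] at this
  · exact hwsq ⟨t, c.val, ht1, ht2, hs, by omega, hrel⟩

end NR

theorem thueChoice_cycleGraph (n : ℕ) (hn : 3 ≤ n) :
    thueChoiceNumber (cycleGraph n) ≤ 5 := by
  obtain ⟨m, rfl⟩ : ∃ m, n = m + 3 := ⟨n - 3, by omega⟩
  refine Nat.sInf_le ?_
  simp only [Set.mem_setOf_eq]
  intro Λ hΛ
  have hL : ∀ i, 5 ≤ ((fun i : ℕ => Λ ⟨i % (m+3), Nat.mod_lt _ (by omega)⟩) i).card :=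
    fun i => hΛ _
  obtain ⟨w, hwmem, hwnw⟩ := NR.wrap_count (n := m+3) hL (by omega)
  obtain ⟨hwlen, hwsq, hwmemL⟩ := NR.mem_words.mp hwmem
  refine ⟨fun v => w.getD v.val 0, ?_, ?_⟩
  · intro v
    have h1 := hwmemL v.val v.isLt
    simp only [Nat.zero_add] at h1
    have hv : (⟨v.val % (m+3), Nat.mod_lt _ (by omega)⟩ : Fin (m+3)) = v :=
      Fin.ext (Nat.mod_eq_of_lt v.isLt)
    rwa [hv] at h1
  · intro u v p hp l hl hmap
    set φ : Fin (m+3) → ℕ := fun v => w.getD v.val 0 with hφ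
    set k := l.length with hk
    have hk1 : 1 ≤ k := List.length_pos_iff.mpr hl
    have hslen : p.support.length = 2*k := by
      have h1 := congrArg List.length hmap
      simp only [List.length_map, List.length_append] at h1
      omega
    obtain ⟨δ, hδ, harc⟩ := NR.arc_of_path p hp
    have hcol : ∀ i < 2*k, φ (u + (i : Fin (m+3)) * δ) = (l ++ l).getD i 0 := by
      intro i hi
      have hilen : i < p.support.length := by omega
      have h1 : (p.support.map φ).getD i 0 = φ (p.support.getD i u) := by
        rw [List.getD_eq_getElem _ 0 (by simpa using hilen),
            List.getD_eq_getElem _ u hilen]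
        exact List.getElem_map ..
      rw [← harc i hilen, ← h1, hmap]
    have h2kn : 2*k ≤ m+3 := by
      by_contra hgt
      push_neg at hgt
      have e0 : p.support.getD 0 u = u := by
        rw [harc 0 (by omega)]
        simp
      have e1 : p.support.getD (m+3) u = u := by
        rw [harc (m+3) (by omega)]
        simp
      have hnd := hp.support_nodup
      have hget : p.support[0]'(by omega) = p.support[m+3]'(by omega) := by
        rw [← List.getD_eq_getElem _ u, ← List.getD_eq_getElem _ u, e0, e1]
      have := (List.Nodup.getElem_inj_iff hnd).mp hget
      omega
    obtain ⟨c, hcsq⟩ : ∃ c : Fin (m+3),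
        ∀ i < k, φ (c + (i : Fin (m+3))) = φ (c + ((k+i : ℕ) : Fin (m+3))) := by
      rcases hδ with hδ1 | hδ1
      · refine ⟨u, ?_⟩
        intro i hi
        have a1 := hcol i (by omega)
        have a2 := hcol (k+i) (by omega)
        rw [hδ1, mul_one] at a1 a2
        rw [a1, a2]
        have e1 : (l ++ l).getD i 0 = l.getD i 0 := NR.getD_append_left (by omega) 0
        have e2 : (l ++ l).getD (k+i) 0 = l.getD i 0 := by
          have : k + i = l.length + i := by rw [hk]
          rw [this, NR.getD_append_right]
        rw [e1, e2]
      · refine ⟨u + ((2*k-1 : ℕ) : Fin (m+3)) * δ, ?_⟩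
        intro i hi
        have key : ∀ j ≤ 2*k-1,
            (u + ((2*k-1 : ℕ) : Fin (m+3)) * δ) + (j : Fin (m+3))
              = u + ((2*k-1-j : ℕ) : Fin (m+3)) * δ := by
          intro j hj
          have hc : ((2*k-1-j : ℕ) : Fin (m+3))
              = ((2*k-1 : ℕ) : Fin (m+3)) - (j : Fin (m+3)) := by
            rw [Nat.cast_sub hj]
          rw [hc, hδ1]
          ring
        rw [key i (by omega), key (k+i) (by omega)]
        rw [hcol _ (by omega), hcol _ (by omega)]
        have e1 : 2*k-1-i = l.length + (k-1-i) := by omega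
        have e2 : 2*k-1-(k+i) = k-1-i := by omega
        rw [e1, NR.getD_append_right, e2, NR.getD_append_left (by omega)]
    refine NR.no_cyc hwlen hwsq hwnw c k hk1 h2kn ?_
    intro i hi
    have hx := hcsq i hi
    have b1 : φ (c + (i : Fin (m+3))) = w.getD ((c.val + i) % (m+3)) 0 := by
      rw [hφ]
      simp only []
      rw [NR.val_add_natCast]
    have b2 : φ (c + ((k+i : ℕ) : Fin (m+3))) = w.getD ((c.val + k + i) % (m+3)) 0 := by
      rw [hφ]
      simp only []
      rw [NR.val_add_natCast]
      congr 1
      rw [Nat.add_assoc]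
    rw [← b1, ← b2]
    exact hx
end

section
/- Every finite tree T with radius rad(T) ≤ 4 satisfies π(T) ≤ 3. -/
open SimpleGraph

/-! ### Auxiliary material -/

/-- The colour pattern on levels `0,1,2,3,4`. -/
private def tc : ℕ → Fin 3 := fun n => [0, 1, 2, 0, 1].getD n 0

/-- `[t+k, t+k-1, ..., t]`. -/
private def downL (t : ℕ) : ℕ → List ℕ
  | 0 => [t]
  | k + 1 => (t + k + 1) :: downL t k

/-- The valley list `[t+k, ..., t, t+1, ..., t+m]`. -/
private def valleyL (t k m : ℕ) : List ℕ := downL t k ++ List.range' (t + 1) m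

private lemma valleyL_head (t k m : ℕ) :
    ∃ r, valleyL t k m = (t + k) :: r := by
  cases k with
  | zero => exact ⟨_, rfl⟩
  | succ k => exact ⟨_, rfl⟩

private lemma no_square_of {α : Type*} (w : List α)
    (h : w.length % 2 = 1 ∨ w.take (w.length / 2) ≠ w.drop (w.length / 2)) :
    ∀ l : List α, l ≠ [] → w ≠ l ++ l := by
  rintro l hl rfl
  rcases h with h | h
  · simp only [List.length_append] at h
    omega
  · apply h
    have hlen : (l ++ l).length / 2 = l.length := by
      simp only [List.length_append]; omega
    rw [hlen, List.take_left, List.drop_left]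

private lemma valley_no_square (t k m : ℕ) (htk : t + k ≤ 4) (htm : t + m ≤ 4) :
    ∀ l : List (Fin 3), l ≠ [] → (valleyL t k m).map tc ≠ l ++ l := by
  apply no_square_of
  have ht : t ≤ 4 := le_trans (Nat.le_add_right _ _) htk
  have hk : k ≤ 4 := le_trans (Nat.le_add_left _ _) htk
  have hm : m ≤ 4 := le_trans (Nat.le_add_left _ _) htm
  interval_cases t <;> interval_cases k <;> interval_cases m <;>
    first | omega | decide

section Graph

variable {V : Type} [DecidableEq V] {T : SimpleGraph V}

/-- Any vertex on a walk from `u` is at distance at most the walk's length from `u`. -/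
private lemma dist_le_of_mem {u v x : V} (p : T.Walk u v) (hx : x ∈ p.support) :
    T.dist u x ≤ p.length :=
  le_trans (SimpleGraph.dist_le (p.takeUntil x hx)) (p.length_takeUntil_le hx)

/-- In a tree, distances to a fixed vertex change by exactly one along each edge. -/
private lemma adj_dist (hT : T.IsTree) (u : V) {v x : V} (h : T.Adj v x) :
    T.dist u v + 1 = T.dist u x ∨ T.dist u x + 1 = T.dist u v := by
  have hc := hT.isConnected
  obtain ⟨Q, hQ, hQl⟩ := hc.exists_path_of_dist u x
  obtain ⟨R, hR, hRl⟩ := hc.exists_path_of_dist u v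
  have hle1 : T.dist u v ≤ T.dist u x + 1 := by
    have := SimpleGraph.dist_le (Q.concat h.symm)
    rwa [Q.length_concat, hQl] at this
  have hle2 : T.dist u x ≤ T.dist u v + 1 := by
    have := SimpleGraph.dist_le (R.concat h)
    rwa [R.length_concat, hRl] at this
  have hne : T.dist u v ≠ T.dist u x := by
    intro heq
    by_cases hv : v ∈ Q.support
    · have hspec := Q.take_spec hv
      have hlen : (Q.takeUntil v hv).length + (Q.dropUntil v hv).length = Q.length := by
        rw [← SimpleGraph.Walk.length_append, hspec]
      have h2 : (Q.dropUntil v hv).length ≠ 0 := by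
        intro h0
        exact h.ne (SimpleGraph.Walk.eq_of_length_eq_zero h0)
      have h3 : T.dist u v ≤ (Q.takeUntil v hv).length :=
        SimpleGraph.dist_le _
      omega
    · -- `cons h Q.reverse` is a path from `v` to `u`, as is `R.reverse`.
      have hW : (SimpleGraph.Walk.cons h Q.reverse).IsPath := by
        rw [SimpleGraph.Walk.cons_isPath_iff]
        refine ⟨hQ.reverse, ?_⟩
        rwa [SimpleGraph.Walk.support_reverse, List.mem_reverse]
      have hRrev : (R.reverse).IsPath := hR.reverse
      have := (hT.existsUnique_path v u).unique hW hRrev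
      have hlen := congrArg SimpleGraph.Walk.length this
      simp only [SimpleGraph.Walk.length_cons, SimpleGraph.Walk.length_reverse] at hlen
      omega
  omega

/-- In a tree, a vertex has at most one neighbour closer to `u`. -/
private lemma lower_unique (hT : T.IsTree) (u : V) {x w1 w2 : V}
    (h1 : T.Adj x w1) (h2 : T.Adj x w2)
    (hd1 : T.dist u w1 + 1 = T.dist u x) (hd2 : T.dist u w2 + 1 = T.dist u x) :
    w1 = w2 := by
  have hc := hT.isConnected
  obtain ⟨P1, hP1, hP1l⟩ := hc.exists_path_of_dist u w1
  obtain ⟨P2, hP2, hP2l⟩ := hc.exists_path_of_dist u w2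
  have hx1 : x ∉ P1.support := by
    intro hx
    have := dist_le_of_mem P1 hx
    omega
  have hx2 : x ∉ P2.support := by
    intro hx
    have := dist_le_of_mem P2 hx
    omega
  have hW1 : (SimpleGraph.Walk.cons h1 P1.reverse).IsPath := by
    rw [SimpleGraph.Walk.cons_isPath_iff]
    refine ⟨hP1.reverse, ?_⟩
    rwa [SimpleGraph.Walk.support_reverse, List.mem_reverse]
  have hW2 : (SimpleGraph.Walk.cons h2 P2.reverse).IsPath := by
    rw [SimpleGraph.Walk.cons_isPath_iff]
    refine ⟨hP2.reverse, ?_⟩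
    rwa [SimpleGraph.Walk.support_reverse, List.mem_reverse]
  have heq := (hT.existsUnique_path x u).unique hW1 hW2
  injection heq

/-- The level sequence along a path in a tree is a valley. -/
private lemma levels_valley (hT : T.IsTree) (u : V) {v w : V} (p : T.Walk v w)
    (hp : p.IsPath) :
    ∃ t k m, p.support.map (T.dist u) = valleyL t k m := by
  induction p with
  | @nil z =>
    exact ⟨T.dist u z, 0, 0, by simp [valleyL, downL]⟩
  | @cons v v' w h q ih =>
    rw [SimpleGraph.Walk.cons_isPath_iff] at hp
    obtain ⟨hq, hv⟩ := hp
    obtain ⟨t, k, m, hL⟩ := ih hq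
    -- the head of `q`'s level list
    have hhead : T.dist u v' = t + k := by
      obtain ⟨r, hr⟩ := valleyL_head t k m
      rw [hr] at hL
      have : q.support.map (T.dist u) = T.dist u v' :: (q.support.tail.map (T.dist u)) := by
        rw [q.support_eq_cons]; rfl
      rw [this] at hL
      exact (List.cons.injEq _ _ _ _).mp hL |>.1
    have hmap : (SimpleGraph.Walk.cons h q).support.map (T.dist u)
        = T.dist u v :: q.support.map (T.dist u) := by
      simp [SimpleGraph.Walk.support_cons]
    rcases adj_dist hT u h with hcase | hcase
    · -- dist u v + 1 = dist u v' : going up backwards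
      cases k with
      | zero =>
        refine ⟨T.dist u v, 0, m + 1, ?_⟩
        rw [hmap, hL]
        have hty : t = T.dist u v + 1 := by omega
        subst hty
        show T.dist u v :: valleyL (T.dist u v + 1) 0 m
            = valleyL (T.dist u v) 0 (m + 1)
        simp [valleyL, downL, List.range'_succ]
      | succ k' =>
        exfalso
        -- q's level list starts (t+k'+1) :: (t+k') :: ...
        cases q with
        | nil =>
          obtain ⟨r, hr⟩ := valleyL_head t k' m
          rw [show valleyL t (k' + 1) m = (t + k' + 1) :: valleyL t k' m from rfl,
            hr] at hL
          simp at hL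
        | @cons _ y _ h2 q2 =>
          have hy : T.dist u y = t + k' := by
            obtain ⟨r, hr⟩ := valleyL_head t k' m
            have : valleyL t (k' + 1) m = (t + k' + 1) :: valleyL t k' m := rfl
            rw [this, hr] at hL
            have hsup : (SimpleGraph.Walk.cons h2 q2).support.map (T.dist u)
                = T.dist u v' :: T.dist u y :: (q2.support.tail.map (T.dist u)) := by
              rw [SimpleGraph.Walk.support_cons, q2.support_eq_cons]; rfl
            rw [hsup] at hL
            have := (List.cons.injEq _ _ _ _).mp hL |>.2
            exact (List.cons.injEq _ _ _ _).mp this |>.1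
          have hdv : T.dist u v = t + k' := by
            rw [hhead] at hcase; omega
          have hvy : v = y :=
            lower_unique hT u h.symm h2 (by omega) (by omega)
          apply hv
          rw [hvy]
          exact List.mem_cons_of_mem _ (SimpleGraph.Walk.start_mem_support q2)
    · -- dist u v' + 1 = dist u v : extend the descending part
      refine ⟨t, k + 1, m, ?_⟩
      rw [hmap, hL]
      have : T.dist u v = t + k + 1 := by omega
      rw [this]
      rfl

end Graph

theorem thue_tree_small_radius {V : Type} [Fintype V] (T : SimpleGraph V)
    (hT : T.IsTree) (hrad : ∃ u : V, ∀ v : V, T.dist u v ≤ 4) :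
    thueNumber T ≤ 3 := by
  classical
  obtain ⟨u, hu⟩ := hrad
  apply Nat.sInf_le
  refine ⟨fun v => tc (T.dist u v), ?_⟩
  intro a b p hp l hl heq
  obtain ⟨t, k, m, hL⟩ := levels_valley hT u p hp
  have hmap : p.support.map (fun v => tc (T.dist u v))
      = (p.support.map (T.dist u)).map tc := by
    rw [List.map_map]; rfl
  have hbound : ∀ x ∈ valleyL t k m, x ≤ 4 := by
    intro x hx
    rw [← hL] at hx
    obtain ⟨z, _, hz⟩ := List.mem_map.mp hx
    rw [← hz]; exact hu z
  have htk : t + k ≤ 4 := by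
    obtain ⟨r, hr⟩ := valleyL_head t k m
    exact hbound _ (by rw [hr]; exact List.mem_cons_self)
  have htm : t + m ≤ 4 := by
    cases m with
    | zero => omega
    | succ m' =>
      refine hbound _ ?_
      apply List.mem_append_right
      rw [List.mem_range'_1]
      omega
  exact valley_no_square t k m htk htm l hl (by rw [hmap, hL] at heq; exact heq)
end

section
/- Every cubic graph G (a finite simple graph in which every vertex has degree exactly 3) satisfies π(G) ≤ 108. -/
open SimpleGraph

set_option linter.unusedSectionVars false
set_option linter.unusedVariables false
set_option maxHeartbeats 1000000


section Aux
variable {V : Type} [Fintype V] [DecidableEq V] (G : SimpleGraph V) [DecidableRel G.Adj]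

noncomputable def listsLen (m : ℕ) : Finset (List V) :=
  (Finset.univ : Finset (Fin m → V)).image List.ofFn

lemma mem_listsLen {m : ℕ} {L : List V} : L ∈ listsLen m ↔ L.length = m := by
  constructor
  · intro h
    simp only [listsLen, Finset.mem_image] at h
    obtain ⟨g, -, rfl⟩ := h
    simp
  · rintro rfl
    simp only [listsLen, Finset.mem_image]
    exact ⟨L.get, Finset.mem_univ _, List.ofFn_get L⟩

noncomputable def chains (u : V) (m : ℕ) : Finset (List V) :=
  @Finset.filter _ (fun L => List.Chain G.Adj u L) (Classical.decPred _) (listsLen m)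

lemma mem_chains {u : V} {m : ℕ} {L : List V} :
    L ∈ chains G u m ↔ L.length = m ∧ List.Chain G.Adj u L := by
  simp [chains, Finset.mem_filter, mem_listsLen]


lemma chains_card (hcubic : ∀ v : V, G.degree v = 3) :
    ∀ (m : ℕ) (u : V), (chains G u m).card ≤ 3 ^ m := by
  intro m
  induction m with
  | zero =>
    intro u
    have : chains G u 0 ⊆ {[]} := by
      intro L hL
      rw [mem_chains G] at hL
      simp [List.length_eq_zero_iff.mp hL.1]
    simpa using Finset.card_le_card this
  | succ m ih =>
    intro u
    have hsub : chains G u (m+1) ⊆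
        (G.neighborFinset u).biUnion (fun w => (chains G w m).image (List.cons w)) := by
      intro L hL
      rw [mem_chains G] at hL
      obtain ⟨hlen, hchain⟩ := hL
      cases L with
      | nil => simp at hlen
      | cons w L' =>
        rw [List.Chain, List.chain_cons] at hchain
        refine Finset.mem_biUnion.mpr ⟨w, (mem_neighborFinset G u w).mpr hchain.1,
          Finset.mem_image.mpr ⟨L', (mem_chains G).mpr ⟨by simpa using hlen, hchain.2⟩, rfl⟩⟩
    calc (chains G u (m+1)).card ≤ _ := Finset.card_le_card hsub
      _ ≤ ∑ w ∈ G.neighborFinset u, ((chains G w m).image (List.cons w)).card :=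
          Finset.card_biUnion_le
      _ ≤ ∑ w ∈ G.neighborFinset u, 3 ^ m := by
          refine Finset.sum_le_sum fun w _ => ?_
          exact le_trans Finset.card_image_le (ih w)
      _ = 3 ^ (m+1) := by
          rw [Finset.sum_const, G.card_neighborFinset_eq_degree, hcubic u]
          rw [smul_eq_mul]; ring

/-- split a chain' list at an occurrence of v -/
lemma chain_split {L : List V} (hC : L.Chain' G.Adj) {i : ℕ} (hi : i < L.length)
    (hv : L.get ⟨i, hi⟩ = v) :
    (L.take i).reverse ∈ chains G v i ∧ L.drop (i+1) ∈ chains G v (L.length - 1 - i) := by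
  have hgetv : L[i] = v := hv
  constructor
  · have h1 : List.Chain' G.Adj (L.take (i+1)) := hC.take _
    have h2 : List.Chain' (flip G.Adj) ((L.take (i+1)).reverse) :=
      List.isChain_reverse.mpr h1
    have h3 : List.Chain' G.Adj ((L.take (i+1)).reverse) :=
      h2.imp (fun a b hab => hab.symm)
    have h4 : (L.take (i+1)).reverse = v :: (L.take i).reverse := by
      rw [List.take_succ]
      simp [List.getElem?_eq_getElem hi, hgetv]
    rw [h4] at h3
    exact (mem_chains G).mpr ⟨by simp [Nat.le_of_lt hi], h3⟩
  · have h1 : List.Chain' G.Adj (L.drop i) := hC.drop _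
    rw [List.drop_eq_getElem_cons hi, hgetv] at h1
    refine (mem_chains G).mpr ⟨by simp; omega, h1⟩

noncomputable def badL (S : Finset V) (v : V) : Finset (List V) :=
  @Finset.filter _
    (fun L => L.Chain' G.Adj ∧ L.Nodup ∧ (∀ x ∈ L, x ∈ S) ∧ L ≠ [] ∧
      L.length % 2 = 0 ∧ v ∈ L.drop (L.length / 2))
    (Classical.decPred _)
    ((Finset.range (2 * Fintype.card V + 1)).biUnion listsLen)

lemma mem_badL {S : Finset V} {v : V} {L : List V} :
    L ∈ badL G S v ↔ L.Chain' G.Adj ∧ L.Nodup ∧ (∀ x ∈ L, x ∈ S) ∧ L ≠ [] ∧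
      L.length % 2 = 0 ∧ v ∈ L.drop (L.length / 2) := by
  simp only [badL, Finset.mem_filter, Finset.mem_biUnion, Finset.mem_range, mem_listsLen]
  constructor
  · rintro ⟨-, h⟩; exact h
  · intro h
    exact ⟨⟨L.length, by have := h.2.1.length_le_card; omega, rfl⟩, h⟩

lemma badL_t_card (hcubic : ∀ v : V, G.degree v = 3) (S : Finset V) (v : V) (t : ℕ) :
    ((badL G S v).filter (fun L => L.length = 2*t)).card ≤ 2*t*3^(2*t-1) := by
  classical
  have hsub : (badL G S v).filter (fun L => L.length = 2*t) ⊆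
      (Finset.range (2*t)).biUnion (fun i =>
        ((chains G v i) ×ˢ (chains G v (2*t-1-i))).image
          (fun pq => pq.1.reverse ++ v :: pq.2)) := by
    intro L hL
    obtain ⟨hmem, hlen⟩ := Finset.mem_filter.mp hL
    rw [mem_badL G] at hmem
    obtain ⟨hC, hnd, hS, hne, hpar, hvdrop⟩ := hmem
    have hvL : v ∈ L := List.mem_of_mem_drop hvdrop
    have hi : L.idxOf v < L.length := List.idxOf_lt_length_iff.mpr hvL
    have hgv : L.get ⟨L.idxOf v, hi⟩ = v := List.getElem_idxOf hi
    have hsplit := chain_split G hC hi hgv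
    refine Finset.mem_biUnion.mpr ⟨L.idxOf v, Finset.mem_range.mpr (by omega), ?_⟩
    refine Finset.mem_image.mpr ⟨((L.take (L.idxOf v)).reverse, L.drop (L.idxOf v + 1)), ?_, ?_⟩
    · exact Finset.mem_product.mpr ⟨hsplit.1, by rw [hlen] at hsplit; exact hsplit.2⟩
    · simp only [List.reverse_reverse]
      conv_rhs => rw [← List.take_append_drop (L.idxOf v) L]
      rw [List.drop_eq_getElem_cons hi]
      congr 1
      simp [hgv]
  calc _ ≤ _ := Finset.card_le_card hsub
    _ ≤ ∑ i ∈ Finset.range (2*t), (((chains G v i) ×ˢ (chains G v (2*t-1-i))).image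
          (fun pq => pq.1.reverse ++ v :: pq.2)).card := Finset.card_biUnion_le
    _ ≤ ∑ i ∈ Finset.range (2*t), 3^(2*t-1) := by
        refine Finset.sum_le_sum fun i hi => ?_
        refine le_trans Finset.card_image_le ?_
        rw [Finset.card_product]
        calc (chains G v i).card * (chains G v (2*t-1-i)).card
            ≤ 3^i * 3^(2*t-1-i) :=
              Nat.mul_le_mul (chains_card G hcubic i v) (chains_card G hcubic _ v)
          _ = 3^(2*t-1) := by
              rw [← pow_add]
              congr 1
              have := Finset.mem_range.mp hi
              omega
    _ = 2*t*3^(2*t-1) := by simp [Finset.sum_const, mul_comm]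


def GoodOn (S : Finset V) (f : V → Fin 108) : Prop :=
  ∀ ⦃u w : V⦄ (p : G.Walk u w), p.IsPath → (∀ x ∈ p.support, x ∈ S) →
    ∀ l : List (Fin 108), l ≠ [] → p.support.map f ≠ l ++ l

noncomputable def AA (S : Finset V) : Finset (V → Fin 108) :=
  @Finset.filter _ (fun f => (∀ x ∉ S, f x = 0) ∧ GoodOn G S f) (Classical.decPred _) Finset.univ

lemma mem_AA {S : Finset V} {f : V → Fin 108} :
    f ∈ AA G S ↔ (∀ x ∉ S, f x = 0) ∧ GoodOn G S f := by
  simp [AA, Finset.mem_filter]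

lemma GoodOn.mono {S T : Finset V} {f : V → Fin 108} (hTS : T ⊆ S) (h : GoodOn G S f) :
    GoodOn G T f := fun u w p hp hsub l hl => h p hp (fun x hx => hTS (hsub x hx)) l hl

lemma GoodOn.congr {S : Finset V} {f g : V → Fin 108} (hfg : ∀ x ∈ S, f x = g x)
    (h : GoodOn G S f) : GoodOn G S g := by
  intro u w p hp hsub l hl hmap
  refine h p hp hsub l hl ?_
  rw [← hmap]
  exact List.map_congr_left fun x hx => hfg x (hsub x hx)

noncomputable def recover (L : List V) (f' : V → Fin 108) : V → Fin 108 :=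
  fun x => if x ∈ L.drop (L.length / 2) then
    f' ((L.take (L.length / 2)).getD (List.idxOf x (L.drop (L.length / 2))) x) else f' x

lemma encode {S : Finset V} {v : V} (hvS : v ∈ S) {f : V → Fin 108}
    (hf0 : ∀ x ∉ S, f x = 0) (hfS' : GoodOn G (S.erase v) f)
    {L : List V} {l : List (Fin 108)}
    (hC : L.Chain' G.Adj) (hnd : L.Nodup) (hS : ∀ x ∈ L, x ∈ S)
    (hlen : L.length = 2 * l.length) (hl : l ≠ [])
    (hvdrop : v ∈ L.drop l.length) (hmap : L.map f = l ++ l) :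
    L ∈ badL G S v ∧
      (fun x => if x ∈ L.drop (L.length / 2) then 0 else f x) ∈
        AA G (S \ (L.drop (L.length / 2)).toFinset) ∧
      f = recover L (fun x => if x ∈ L.drop (L.length / 2) then 0 else f x) := by
  classical
  have hl1 : 0 < l.length := List.length_pos_iff.mpr hl
  have h2 : L.length / 2 = l.length := by omega
  set t := l.length with ht
  have hLne : L ≠ [] := by
    intro h; rw [h] at hlen; simp at hlen; omega
  have hsub' : S \ (L.drop t).toFinset ⊆ S.erase v := by
    intro x hx
    rw [Finset.mem_sdiff] at hx
    refine Finset.mem_erase.mpr ⟨?_, hx.1⟩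
    intro h; exact hx.2 (List.mem_toFinset.mpr (h ▸ hvdrop))
  rw [h2]
  refine ⟨?_, ?_, ?_⟩
  · rw [mem_badL G]
    exact ⟨hC, hnd, hS, hLne, by omega, h2 ▸ hvdrop⟩
  · rw [mem_AA G]
    constructor
    · intro x hx
      by_cases hxd : x ∈ L.drop t
      · simp [hxd]
      · rw [Finset.mem_sdiff, not_and_or, not_not] at hx
        rcases hx with hx | hx
        · simp [hxd, hf0 x hx]
        · exact absurd (List.mem_toFinset.mp hx) hxd
    · refine GoodOn.congr G (f := f) (fun x hx => ?_) ((hfS'.mono G hsub'))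
      have hxd : x ∉ L.drop t := fun h => (Finset.mem_sdiff.mp hx).2 (List.mem_toFinset.mpr h)
      simp [hxd]
  · funext x
    simp only [recover, h2]
    by_cases hx : x ∈ L.drop t
    · rw [if_pos hx]
      have hjlt : List.idxOf x (L.drop t) < (L.drop t).length :=
        List.idxOf_lt_length_iff.mpr hx
      set j := List.idxOf x (L.drop t) with hj
      have hdl : (L.drop t).length = t := by rw [List.length_drop]; omega
      have hjt : j < t := by omega
      have hjL : j < L.length := by omega
      have htake : (L.take t).length = t := by rw [List.length_take]; omega
      have hgetD : (L.take t).getD j x = L[j]'hjL := by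
        rw [List.getD_eq_getElem _ _ (by omega : j < (L.take t).length)]
        exact List.getElem_take
      rw [hgetD]
      have hymem : L[j]'hjL ∈ L.take t := by
        have : (L.take t)[j]'(by omega) ∈ L.take t := List.getElem_mem _
        rwa [List.getElem_take] at this
      have hynd : L[j]'hjL ∉ L.drop t := by
        have hnd' := hnd
        rw [← List.take_append_drop t L, List.nodup_append] at hnd'
        exact fun hmem => hnd'.2.2 _ hymem _ hmem rfl
      rw [if_neg hynd]
      -- now show f x = f (L[j])
      have hxj : (L.drop t)[j]'hjlt = x := List.getElem_idxOf hjlt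
      have htj : t + j < L.length := by omega
      have hxL : L[t+j]'htj = x := List.getElem_drop.symm.trans hxj
      have hmapj : f (L[j]'hjL) = l[j]'hjt := by
        have h := congrArg (fun L' => L'[j]?) hmap
        simp only [List.getElem?_map, List.getElem?_eq_getElem hjL,
          List.getElem?_append_left hjt, List.getElem?_eq_getElem hjt, Option.map_some] at h
        exact Option.some.inj h
      have hmaptj : f x = l[j]'hjt := by
        have h := congrArg (fun L' => L'[t+j]?) hmap
        simp only [List.getElem?_map, List.getElem?_eq_getElem htj, Option.map_some,
          List.getElem?_append_right (by omega : l.length ≤ t + j)] at h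
        rw [hxL] at h
        have he : t + j - l.length = j := by omega
        rw [he, List.getElem?_eq_getElem hjt] at h
        exact Option.some.inj h
      rw [hmaptj, hmapj]
    · rw [if_neg hx, if_neg hx]


lemma AA_empty : 1 ≤ (AA G ∅).card := by
  have h : (fun _ : V => (0 : Fin 108)) ∈ AA G ∅ := by
    rw [mem_AA G]
    refine ⟨fun x _ => rfl, ?_⟩
    intro u w p hp hsub l hl hmap
    exact absurd (hsub u p.start_mem_support) (by simp)
  exact Finset.card_pos.mpr ⟨_, h⟩

lemma iter {n : ℕ}
    (H : ∀ S : Finset V, S.card ≤ n → ∀ v ∈ S, 81 * (AA G (S.erase v)).card ≤ (AA G S).card) :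
    ∀ (m : ℕ) (T U : Finset V), U ⊆ T → T.card ≤ n → T.card - U.card ≤ m →
      81 ^ (T.card - U.card) * (AA G U).card ≤ (AA G T).card := by
  intro m
  induction m with
  | zero =>
    intro T U hUT hTn hd
    have hc := Finset.card_le_card hUT
    have : U = T := Finset.eq_of_subset_of_card_le hUT (by omega)
    subst this
    simp
  | succ m ih =>
    intro T U hUT hTn hd
    by_cases h0 : T.card - U.card = 0
    · have hc := Finset.card_le_card hUT
      have : U = T := Finset.eq_of_subset_of_card_le hUT (by omega)
      subst this; simp
    · have hne : (T \ U).Nonempty := by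
        rw [← Finset.card_pos, Finset.card_sdiff_of_subset hUT]; omega
      obtain ⟨w, hw⟩ := hne
      obtain ⟨hwT, hwU⟩ := Finset.mem_sdiff.mp hw
      have hU' : U ⊆ T.erase w := fun x hx =>
        Finset.mem_erase.mpr ⟨fun h => hwU (h ▸ hx), hUT hx⟩
      have hTe : (T.erase w).card = T.card - 1 := Finset.card_erase_of_mem hwT
      have hcU : U.card ≤ (T.erase w).card := Finset.card_le_card hU'
      have h1 := ih (T.erase w) U hU' (by omega) (by omega)
      have h2 := H T hTn w hwT
      have hexp : T.card - U.card = ((T.erase w).card - U.card) + 1 := by omega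
      calc 81 ^ (T.card - U.card) * (AA G U).card
          = 81 * (81 ^ ((T.erase w).card - U.card) * (AA G U).card) := by
            rw [hexp, pow_succ]; ring
        _ ≤ 81 * (AA G (T.erase w)).card := Nat.mul_le_mul_left _ h1
        _ ≤ (AA G T).card := h2

lemma geom_bound : ∀ N : ℕ, ∑ t ∈ Finset.Icc 1 N, ((2:ℚ)/9)^t ≤ 2/7 - (2/7)*(2/9)^N := by
  intro N
  induction N with
  | zero => simp
  | succ N ih =>
    rw [Finset.sum_Icc_succ_top (by omega : 1 ≤ N + 1), pow_succ]
    have hq : (0:ℚ) ≤ (2/9)^N := by positivity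
    linarith

lemma nat_term (s : ℕ) : 2*(s+1)*3^(2*(s+1)-1)*9^(s+1) ≤ 54*2^(s+1)*81^s := by
  have hp : s + 1 ≤ 2^(s+1) := Nat.le_of_lt Nat.lt_two_pow_self
  have e1 : 3^(2*(s+1)-1)*9^(s+1) = 27*81^s := by
    have h1 : 2*(s+1)-1 = 2*s+1 := by omega
    rw [h1, show (9:ℕ) = 3^2 from rfl, show (81:ℕ) = 3^4 from rfl, ← pow_mul, ← pow_mul,
      ← pow_add, show (27:ℕ) = 3^3 from rfl, ← pow_add]
    congr 1
    omega
  calc 2*(s+1)*3^(2*(s+1)-1)*9^(s+1) = 54*((s+1)*81^s) := by rw [mul_assoc, e1]; ring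
    _ ≤ 54*(2^(s+1)*81^s) := Nat.mul_le_mul_left _ (Nat.mul_le_mul_right _ hp)
    _ = 54*2^(s+1)*81^s := by ring

lemma q_term (t : ℕ) (ht : 1 ≤ t) :
    ((2*t*3^(2*t-1) : ℕ) : ℚ) / 81^(t-1) ≤ 54 * (2/9)^t := by
  obtain ⟨s, rfl⟩ : ∃ s, t = s + 1 := ⟨t-1, by omega⟩
  rw [div_pow, mul_div_assoc' , div_le_div_iff₀ (by positivity) (by positivity)]
  have h := nat_term s
  have hcast : ((2*(s+1)*3^(2*(s+1)-1)*9^(s+1) : ℕ) : ℚ) ≤ ((54*2^(s+1)*81^s : ℕ) : ℚ) :=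
    Nat.cast_le.mpr h
  push_cast at hcast ⊢
  nlinarith [hcast]


lemma bad_sum {S : Finset V} {v : V} (hcubic : ∀ v : V, G.degree v = 3) (a : ℕ)
    (hL : ∀ L ∈ badL G S v,
      (AA G (S \ (L.drop (L.length/2)).toFinset)).card * 81^(L.length/2 - 1) ≤ a) :
    ∑ L ∈ badL G S v, (AA G (S \ (L.drop (L.length/2)).toFinset)).card ≤ 27 * a := by
  classical
  set N := Fintype.card V with hN
  have hunion : badL G S v = (Finset.Icc 1 N).biUnion
      (fun t => (badL G S v).filter (fun L => L.length = 2*t)) := by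
    ext L
    simp only [Finset.mem_biUnion, Finset.mem_filter, Finset.mem_Icc]
    constructor
    · intro hLmem
      obtain ⟨hC, hnd, hSL, hne, hpar, hdrop⟩ := (mem_badL G).mp hLmem
      have h1 : 0 < L.length := List.length_pos_iff.mpr hne
      have h2 := hnd.length_le_card
      exact ⟨L.length/2, ⟨by omega, by omega⟩, hLmem, by omega⟩
    · rintro ⟨t, _, h, _⟩; exact h
  have hdisj : (↑(Finset.Icc 1 N) : Set ℕ).PairwiseDisjoint
      (fun t => (badL G S v).filter (fun L => L.length = 2*t)) := by
    intro t _ t' _ htt'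
    apply Finset.disjoint_left.mpr
    intro L hL1 hL2
    have e1 := (Finset.mem_filter.mp hL1).2
    have e2 := (Finset.mem_filter.mp hL2).2
    exact htt' (by omega)
  have key : ∀ t ∈ Finset.Icc 1 N,
      ∑ L ∈ (badL G S v).filter (fun L => L.length = 2*t), (((AA G (S \ (L.drop (L.length/2)).toFinset)).card : ℚ))
        ≤ 54 * ((2:ℚ)/9)^t * (a:ℚ) := by
    intro t htmem
    have ht1 : 1 ≤ t := (Finset.mem_Icc.mp htmem).1
    have hterm : ∀ L ∈ (badL G S v).filter (fun L => L.length = 2*t),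
        ((AA G (S \ (L.drop (L.length/2)).toFinset)).card : ℚ) ≤ (a : ℚ) / 81^(t-1) := by
      intro L hLf
      obtain ⟨hLb, hlen⟩ := Finset.mem_filter.mp hLf
      have h3 := hL L hLb
      have h4 : L.length / 2 = t := by omega
      rw [h4] at h3
      rw [h4, le_div_iff₀ (by positivity)]
      exact_mod_cast h3
    calc ∑ L ∈ (badL G S v).filter (fun L => L.length = 2*t), (((AA G (S \ (L.drop (L.length/2)).toFinset)).card : ℚ))
        ≤ ∑ L ∈ (badL G S v).filter (fun L => L.length = 2*t), (a:ℚ)/81^(t-1) :=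
          Finset.sum_le_sum hterm
      _ = ((badL G S v).filter (fun L => L.length = 2*t)).card * ((a:ℚ)/81^(t-1)) := by
          rw [Finset.sum_const, nsmul_eq_mul]
      _ ≤ ((2*t*3^(2*t-1) : ℕ) : ℚ) * ((a:ℚ)/81^(t-1)) := by
          apply mul_le_mul_of_nonneg_right _ (by positivity)
          exact_mod_cast badL_t_card G hcubic S v t
      _ = ((2*t*3^(2*t-1) : ℕ) : ℚ)/81^(t-1) * a := by ring
      _ ≤ 54*((2:ℚ)/9)^t * (a:ℚ) := by
          apply mul_le_mul_of_nonneg_right (q_term t ht1) (by positivity)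
  have hQ : ((∑ L ∈ badL G S v, (AA G (S \ (L.drop (L.length/2)).toFinset)).card : ℕ) : ℚ) ≤ 27 * a := by
    rw [hunion, Finset.sum_biUnion hdisj, Nat.cast_sum]
    have step1 : ∑ t ∈ Finset.Icc 1 N, ((∑ L ∈ (badL G S v).filter (fun L => L.length = 2*t), (AA G (S \ (L.drop (L.length/2)).toFinset)).card : ℕ) : ℚ)
        ≤ ∑ t ∈ Finset.Icc 1 N, 54 * ((2:ℚ)/9)^t * (a:ℚ) := by
      refine Finset.sum_le_sum fun t ht => ?_
      rw [Nat.cast_sum]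
      exact key t ht
    refine le_trans step1 ?_
    have hgeo : ∑ t ∈ Finset.Icc 1 N, ((2:ℚ)/9)^t ≤ 2/7 := by
      refine le_trans (geom_bound N) ?_
      have : (0:ℚ) ≤ (2/7)*(2/9)^N := by positivity
      linarith
    have ha : (0:ℚ) ≤ a := Nat.cast_nonneg a
    calc ∑ t ∈ Finset.Icc 1 N, 54 * ((2:ℚ)/9)^t * a
        = 54 * a * ∑ t ∈ Finset.Icc 1 N, ((2:ℚ)/9)^t := by
          rw [Finset.mul_sum]; apply Finset.sum_congr rfl; intro t _; ring
      _ ≤ 54 * a * (2/7) := by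
          apply mul_le_mul_of_nonneg_left hgeo (by positivity)
      _ ≤ 27 * a := by nlinarith
  exact_mod_cast hQ

lemma main (hcubic : ∀ v : V, G.degree v = 3) :
    ∀ (n : ℕ) (S : Finset V), S.card ≤ n → ∀ v ∈ S,
      81 * (AA G (S.erase v)).card ≤ (AA G S).card := by
  intro n
  induction n with
  | zero =>
    intro S hS v hv
    rw [Nat.le_zero, Finset.card_eq_zero] at hS
    subst hS
    exact absurd hv (Finset.notMem_empty v)
  | succ n ih =>
    intro S hS v hv
    classical
    set S' := S.erase v with hS'def
    have hvS' : v ∉ S' := Finset.notMem_erase v S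
    have hS'sub : S' ⊆ S := Finset.erase_subset v S
    have hS'card : S'.card ≤ n := by
      rw [hS'def, Finset.card_erase_of_mem hv]
      have := Finset.card_pos.mpr ⟨v, hv⟩
      omega
    set Ext : Finset (V → Fin 108) :=
      ((AA G S') ×ˢ (Finset.univ : Finset (Fin 108))).image
        (fun p => Function.update p.1 v p.2) with hExtdef
    have hExtcard : Ext.card = (AA G S').card * 108 := by
      rw [hExtdef, Finset.card_image_of_injOn, Finset.card_product]
      · simp
      · rintro ⟨g, cc⟩ hg ⟨g', cc'⟩ hg' heq
        simp only [Finset.coe_product, Set.mem_prod, Finset.mem_coe] at hg hg'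
        have hg0 : g v = 0 := ((mem_AA G).mp hg.1).1 v hvS'
        have hg0' : g' v = 0 := ((mem_AA G).mp hg'.1).1 v hvS'
        have hcc : cc = cc' := by
          have h := congrFun heq v
          simpa [Function.update_self] using h
        have hgg : g = g' := by
          funext x
          by_cases hx : x = v
          · subst hx; rw [hg0, hg0']
          · have h := congrFun heq x
            simpa [Function.update_of_ne hx] using h
        simp [hcc, hgg]
    have hAAsub : AA G S ⊆ Ext := by
      intro f hf
      obtain ⟨hf0, hfG⟩ := (mem_AA G).mp hf
      have hgmem : Function.update f v 0 ∈ AA G S' := by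
        rw [mem_AA G]
        constructor
        · intro x hx
          by_cases hxv : x = v
          · subst hxv; simp [Function.update_self]
          · rw [Function.update_of_ne hxv]
            apply hf0
            intro hxS
            exact hx (Finset.mem_erase.mpr ⟨hxv, hxS⟩)
        · refine GoodOn.congr G (f := f) (fun x hx => ?_) (hfG.mono G hS'sub)
          rw [Function.update_of_ne (Finset.mem_erase.mp hx).1]
      refine Finset.mem_image.mpr ⟨(Function.update f v 0, f v), ?_, ?_⟩
      · exact Finset.mem_product.mpr ⟨hgmem, Finset.mem_univ _⟩
      · simp
    have hbad : Ext \ AA G S ⊆ (badL G S v).biUnion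
        (fun L => (AA G (S \ (L.drop (L.length/2)).toFinset)).image (recover L)) := by
      intro f hf
      obtain ⟨hfE, hfnA⟩ := Finset.mem_sdiff.mp hf
      obtain ⟨⟨g, cc⟩, hgc, hfeq0⟩ := Finset.mem_image.mp hfE
      obtain ⟨hgA, -⟩ := Finset.mem_product.mp hgc
      obtain ⟨hg0, hgG⟩ := (mem_AA G).mp hgA
      have hfdef : f = Function.update g v cc := hfeq0.symm
      have hf0 : ∀ x ∉ S, f x = 0 := by
        intro x hx
        have hxv : x ≠ v := fun h => hx (h ▸ hv)
        rw [hfdef, Function.update_of_ne hxv]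
        exact hg0 x (fun h => hx (hS'sub h))
      have hfS' : GoodOn G S' f := by
        refine GoodOn.congr G (f := g) (fun x hx => ?_) hgG
        rw [hfdef, Function.update_of_ne (Finset.mem_erase.mp hx).1]
      have hnG : ¬ GoodOn G S f := by
        intro hG
        exact hfnA ((mem_AA G).mpr ⟨hf0, hG⟩)
      rw [GoodOn] at hnG
      push_neg at hnG
      obtain ⟨u, w, p, hp, hsub, l, hl, hmap⟩ := hnG
      have hvsupp : v ∈ p.support := by
        by_contra hvn
        exact hfS' p hp
          (fun x hx => Finset.mem_erase.mpr ⟨fun h => hvn (h ▸ hx), hsub x hx⟩) l hl hmap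
      have hlensupp : p.support.length = 2 * l.length := by
        have h := congrArg List.length hmap
        rw [List.length_map, List.length_append] at h
        omega
      by_cases hcase : v ∈ p.support.drop l.length
      · obtain ⟨hLb, hf'A, hfeq⟩ := encode G hv hf0 hfS' p.isChain_adj_support
          hp.support_nodup hsub hlensupp hl hcase hmap
        exact Finset.mem_biUnion.mpr ⟨_, hLb, Finset.mem_image.mpr ⟨_, hf'A, hfeq.symm⟩⟩
      · have hC' := p.reverse.isChain_adj_support
        rw [Walk.support_reverse] at hC'
        have hnd' : p.support.reverse.Nodup := by
          rw [List.nodup_reverse]; exact hp.support_nodup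
        have hS2 : ∀ x ∈ p.support.reverse, x ∈ S := fun x hx => hsub x (List.mem_reverse.mp hx)
        have hlen2 : p.support.reverse.length = 2 * l.reverse.length := by simpa using hlensupp
        have hl2 : l.reverse ≠ [] := fun h => hl (by simpa using congrArg List.reverse h)
        have hvtake : v ∈ p.support.take l.length := by
          have h := List.take_append_drop l.length p.support
          have hvm := hvsupp
          rw [← h] at hvm
          rcases List.mem_append.mp hvm with h' | h'
          · exact h'
          · exact absurd h' hcase
        have hvdrop2 : v ∈ p.support.reverse.drop l.reverse.length := by
          have hrt : (p.support.take l.length).reverse = p.support.reverse.drop l.length := by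
            rw [List.reverse_take]
            congr 1
            omega
          rw [List.length_reverse, ← hrt, List.mem_reverse]
          exact hvtake
        have hmap2 : p.support.reverse.map f = l.reverse ++ l.reverse := by
          rw [List.map_reverse, hmap, List.reverse_append]
        obtain ⟨hLb, hf'A, hfeq⟩ := encode G hv hf0 hfS' hC' hnd' hS2 hlen2 hl2 hvdrop2 hmap2
        exact Finset.mem_biUnion.mpr ⟨_, hLb, Finset.mem_image.mpr ⟨_, hf'A, hfeq.symm⟩⟩
    have hperL : ∀ L ∈ badL G S v,
        (AA G (S \ (L.drop (L.length/2)).toFinset)).card * 81^(L.length/2 - 1)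
          ≤ (AA G S').card := by
      intro L hLb
      obtain ⟨hC, hnd, hSL, hne, hpar, hdropv⟩ := (mem_badL G).mp hLb
      set t := L.length / 2 with ht2
      set H2 := (L.drop t).toFinset with hH2
      have hH2sub : H2 ⊆ S := by
        intro x hx
        exact hSL x (List.mem_of_mem_drop (List.mem_toFinset.mp hx))
      have hndd : (L.drop t).Nodup := (List.drop_sublist t L).nodup hnd
      have hlpos : 0 < L.length := List.length_pos_iff.mpr hne
      have hH2card : H2.card = t := by
        rw [hH2, List.toFinset_card_of_nodup hndd, List.length_drop]; omega
      have ht1 : 1 ≤ t := by omega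
      have hUsub : S \ H2 ⊆ S' := by
        intro x hx
        obtain ⟨hxS, hxH⟩ := Finset.mem_sdiff.mp hx
        exact Finset.mem_erase.mpr ⟨fun h => hxH (h ▸ List.mem_toFinset.mpr hdropv), hxS⟩
      have htS : t ≤ S.card := hH2card ▸ Finset.card_le_card hH2sub
      have hUcard : (S \ H2).card = S.card - t := by
        rw [Finset.card_sdiff_of_subset hH2sub, hH2card]
      have hScard : S'.card = S.card - 1 := Finset.card_erase_of_mem hv
      have hd : S'.card - (S \ H2).card = t - 1 := by omega
      have hiter := iter G ih S'.card S' (S \ H2) hUsub hS'card (by omega)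
      rw [hd] at hiter
      calc (AA G (S \ H2)).card * 81^(t-1) = 81^(t-1) * (AA G (S \ H2)).card := mul_comm _ _
        _ ≤ (AA G S').card := hiter
    have hsum := bad_sum G hcubic ((AA G S').card) hperL
    have hbadcard : (Ext \ AA G S).card ≤ 27 * (AA G S').card := by
      calc (Ext \ AA G S).card
          ≤ ((badL G S v).biUnion
              (fun L => (AA G (S \ (L.drop (L.length/2)).toFinset)).image (recover L))).card :=
            Finset.card_le_card hbad
        _ ≤ ∑ L ∈ badL G S v,
              ((AA G (S \ (L.drop (L.length/2)).toFinset)).image (recover L)).card :=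
            Finset.card_biUnion_le
        _ ≤ ∑ L ∈ badL G S v, (AA G (S \ (L.drop (L.length/2)).toFinset)).card :=
            Finset.sum_le_sum (fun L _ => Finset.card_image_le)
        _ ≤ 27 * (AA G S').card := hsum
    have hExtle : Ext.card ≤ (AA G S).card + (Ext \ AA G S).card := by
      have hsubU : Ext ⊆ AA G S ∪ (Ext \ AA G S) := by
        intro f hf
        by_cases h : f ∈ AA G S
        · exact Finset.mem_union_left _ h
        · exact Finset.mem_union_right _ (Finset.mem_sdiff.mpr ⟨hf, h⟩)
      calc Ext.card ≤ (AA G S ∪ (Ext \ AA G S)).card := Finset.card_le_card hsubU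
        _ ≤ _ := Finset.card_union_le _ _
    omega



lemma AA_pos (hcubic : ∀ v : V, G.degree v = 3) :
    ∀ (n : ℕ) (S : Finset V), S.card ≤ n → 1 ≤ (AA G S).card := by
  intro n
  induction n with
  | zero =>
    intro S hS
    rw [Nat.le_zero, Finset.card_eq_zero] at hS
    subst hS
    exact AA_empty G
  | succ n ih =>
    intro S hS
    rcases Finset.eq_empty_or_nonempty S with rfl | ⟨v, hv⟩
    · exact AA_empty G
    · have h := main G hcubic (n+1) S hS v hv
      have hcp := Finset.card_pos.mpr ⟨v, hv⟩
      have h2 : 1 ≤ (AA G (S.erase v)).card := by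
        refine ih _ ?_
        rw [Finset.card_erase_of_mem hv]
        omega
      omega

end Aux

theorem thue_cubic {V : Type} [Fintype V] (G : SimpleGraph V) [DecidableRel G.Adj]
    (hcubic : ∀ v : V, G.degree v = 3) :
    thueNumber G ≤ 108 := by
  classical
  have hpos := AA_pos G hcubic (Finset.univ.card) Finset.univ le_rfl
  obtain ⟨f, hf⟩ := Finset.card_pos.mp hpos
  obtain ⟨-, hgood⟩ := (mem_AA G).mp hf
  refine Nat.sInf_le ?_
  exact ⟨f, fun u w p hp l hl => hgood p hp (fun x _ => Finset.mem_univ x) l hl⟩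
end
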